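/- (Proposition 1) Under the stated setup, if the matrix Ṁ_d(t) − 2 D_d(t) is negative semidefinite for all t ≥ 0, then the variable admittance system is passive with respect to the input–output pair (F_ext, ẋ): for every t ≥ 0, ∫₀ᵗ ẋ(τ)ᵀ F_ext(τ) dτ ≥ H(t) − H(0) ≥ −H(0). -/

import Mathlib

open Matrix

/-- **Proposition 1.** If `Ṁ_d(t) − 2 D_d(t)` is negative semidefinite for all
`t ≥ 0`, then the variable admittance system is passive with respect to `(F_ext, ẋ)`:
for every `t ≥ 0`, `∫₀ᵗ ẋᵀ F_ext dτ ≥ H(t) − H(0) ≥ −H(0)`. -/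
theorem passivity_condition {n : ℕ} (hn : 0 < n)
    (x : ℝ → Fin n → ℝ) (hx : ContDiff ℝ 2 x)
    (Md Dd Md' Dd' : ℝ → Matrix (Fin n) (Fin n) ℝ)
    (hMd' : ∀ i j t, HasDerivAt (fun s => Md s i j) (Md' t i j) t)
    (hMd'cont : ∀ i j, Continuous fun t => Md' t i j)
    (hDd' : ∀ i j t, HasDerivAt (fun s => Dd s i j) (Dd' t i j) t)
    (hDd'cont : ∀ i j, Continuous fun t => Dd' t i j)
    (hMdpd : ∀ t, (Md t).PosDef) (hDdpd : ∀ t, (Dd t).PosDef)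
    (Fext : ℝ → Fin n → ℝ)
    (hFext : ∀ t, Fext t = Md t *ᵥ deriv (deriv x) t + Dd t *ᵥ deriv x t)
    (H : ℝ → ℝ)
    (hH : ∀ t, H t = (1 / 2) * (deriv x t ⬝ᵥ (Md t *ᵥ deriv x t)))
    (hcond : ∀ t ≥ (0 : ℝ), (-(Md' t - (2 : ℝ) • Dd t)).PosSemidef) :
    ∀ t ≥ (0 : ℝ),
      (∫ τ in (0 : ℝ)..t, deriv x τ ⬝ᵥ Fext τ) ≥ H t - H 0 ∧ H t - H 0 ≥ -H 0 := by
  -- regularity of x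
  have h2 : ContDiff ℝ ((1:ℕ) + 1) x := by apply hx.of_le; norm_num
  obtain ⟨hxd, -, h1⟩ := contDiff_succ_iff_deriv.mp h2
  obtain ⟨hvd, hacont⟩ := contDiff_one_iff_deriv.mp h1
  set v : ℝ → Fin n → ℝ := deriv x with hvdef
  set a : ℝ → Fin n → ℝ := deriv (deriv x) with hadef
  have hvcont : Continuous v := h1.continuous
  have hai : ∀ (i : Fin n) (t : ℝ), HasDerivAt (fun s => v s i) (a t i) t :=
    fun i t => hasDerivAt_pi.mp (hvd t).hasDerivAt i
  have hvci : ∀ i : Fin n, Continuous fun t => v t i :=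
    fun i => (continuous_apply i).comp hvcont
  have haci : ∀ i : Fin n, Continuous fun t => a t i :=
    fun i => (continuous_apply i).comp hacont
  have hMdc : ∀ i j, Continuous fun t => Md t i j :=
    fun i j => continuous_iff_continuousAt.mpr fun t =>
      (hMd' i j t).differentiableAt.continuousAt
  have hDdc : ∀ i j, Continuous fun t => Dd t i j :=
    fun i j => continuous_iff_continuousAt.mpr fun t =>
      (hDd' i j t).differentiableAt.continuousAt
  have hsym : ∀ (t : ℝ) i j, Md t i j = Md t j i := by
    intro t i j
    have := (hMdpd t).isHermitian.apply i j
    simpa using this.symm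
  -- H as a double sum
  have hHeq : H = fun s => ∑ i, ∑ j, (1/2 : ℝ) * (v s i * (Md s i j * v s j)) := by
    funext s
    rw [hH s]
    simp only [dotProduct, mulVec, Finset.mul_sum]
  -- derivative of H
  set g : ℝ → ℝ := fun t => ∑ i, ∑ j, (1/2 : ℝ) *
      (a t i * (Md t i j * v t j) + v t i * (Md' t i j * v t j + Md t i j * a t j)) with hgdef
  have hHder : ∀ t, HasDerivAt H (g t) t := by
    intro t
    rw [hHeq]
    exact HasDerivAt.fun_sum fun i _ => HasDerivAt.fun_sum fun j _ =>
      (((hai i t).mul ((hMd' i j t).mul (hai j t))).const_mul _)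
  have hgcont : Continuous g := by
    apply continuous_finset_sum _ fun i _ => continuous_finset_sum _ fun j _ => ?_
    exact continuous_const.mul
      ((((haci i).mul ((hMdc i j).mul (hvci j)))).add
        ((hvci i).mul (((hMd'cont i j).mul (hvci j)).add ((hMdc i j).mul (haci j)))))
  -- integrand as a double sum
  have hfeq : ∀ τ, v τ ⬝ᵥ Fext τ =
      ∑ i, ∑ j, (v τ i * (Md τ i j * a τ j) + v τ i * (Dd τ i j * v τ j)) := by
    intro τ
    rw [hFext τ]
    simp only [dotProduct, mulVec, Pi.add_apply, Finset.mul_sum, mul_add,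
      Finset.sum_add_distrib]
  have hfcont : Continuous fun τ => v τ ⬝ᵥ Fext τ := by
    rw [show (fun τ => v τ ⬝ᵥ Fext τ) = fun τ => ∑ i, ∑ j,
        (v τ i * (Md τ i j * a τ j) + v τ i * (Dd τ i j * v τ j)) from funext hfeq]
    apply continuous_finset_sum _ fun i _ => continuous_finset_sum _ fun j _ => ?_
    exact ((hvci i).mul ((hMdc i j).mul (haci j))).add
      ((hvci i).mul ((hDdc i j).mul (hvci j)))
  -- pointwise inequality for τ ≥ 0
  have hle : ∀ τ : ℝ, 0 ≤ τ → g τ ≤ v τ ⬝ᵥ Fext τ := by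
    intro τ hτ
    have hswap : (∑ i, ∑ j, (1/2:ℝ) * (a τ i * (Md τ i j * v τ j)))
        = ∑ i, ∑ j, (1/2:ℝ) * (v τ i * (Md τ i j * a τ j)) := by
      rw [Finset.sum_comm]
      exact Finset.sum_congr rfl fun i _ => Finset.sum_congr rfl fun j _ => by
        rw [hsym τ j i]; ring
    have hgτ : g τ = ∑ i, ∑ j,
        (v τ i * (Md τ i j * a τ j) + (1/2:ℝ) * (v τ i * (Md' τ i j * v τ j))) := by
      simp only [hgdef]
      calc (∑ i, ∑ j, (1/2:ℝ) *
              (a τ i * (Md τ i j * v τ j) + v τ i * (Md' τ i j * v τ j + Md τ i j * a τ j)))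
          = (∑ i, ∑ j, (1/2:ℝ) * (a τ i * (Md τ i j * v τ j)))
            + ∑ i, ∑ j, ((1/2:ℝ) * (v τ i * (Md' τ i j * v τ j))
              + (1/2:ℝ) * (v τ i * (Md τ i j * a τ j))) := by
            simp only [← Finset.sum_add_distrib]
            exact Finset.sum_congr rfl fun i _ => Finset.sum_congr rfl fun j _ => by ring
        _ = (∑ i, ∑ j, (1/2:ℝ) * (v τ i * (Md τ i j * a τ j)))
            + ∑ i, ∑ j, ((1/2:ℝ) * (v τ i * (Md' τ i j * v τ j))
              + (1/2:ℝ) * (v τ i * (Md τ i j * a τ j))) := by rw [hswap]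
        _ = _ := by
            simp only [← Finset.sum_add_distrib]
            exact Finset.sum_congr rfl fun i _ => Finset.sum_congr rfl fun j _ => by ring
    have hdiff : v τ ⬝ᵥ Fext τ - g τ
        = (1/2:ℝ) * (star (v τ) ⬝ᵥ ((-(Md' τ - (2:ℝ) • Dd τ)) *ᵥ v τ)) := by
      rw [hfeq τ, hgτ]
      simp only [star_trivial, dotProduct, mulVec, Matrix.neg_apply, Matrix.sub_apply,
        Matrix.smul_apply, smul_eq_mul, Finset.mul_sum, ← Finset.sum_sub_distrib]
      exact Finset.sum_congr rfl fun i _ => Finset.sum_congr rfl fun j _ => by ring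
    have h0 := (hcond τ hτ).dotProduct_mulVec_nonneg (v τ)
    nlinarith [h0, hdiff]
  -- nonnegativity of H
  have hHnn : ∀ t, 0 ≤ H t := by
    intro t
    rw [hH t]
    have h0 := (hMdpd t).posSemidef.dotProduct_mulVec_nonneg (v t)
    simp only [star_trivial] at h0
    linarith
  intro t ht
  have hint : (∫ τ in (0:ℝ)..t, g τ) = H t - H 0 :=
    intervalIntegral.integral_eq_sub_of_hasDerivAt (fun τ _ => hHder τ)
      (hgcont.intervalIntegrable 0 t)
  have hmono : (∫ τ in (0:ℝ)..t, g τ) ≤ ∫ τ in (0:ℝ)..t, v τ ⬝ᵥ Fext τ :=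
    intervalIntegral.integral_mono_on ht (hgcont.intervalIntegrable 0 t)
      (hfcont.intervalIntegrable 0 t) (fun τ hτ => hle τ hτ.1)
  constructor
  · rw [← hint]; exact hmono
  · have := hHnn t; linarith
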